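/- Let V be an n-dimensional vector space over a field F and g ∈ GL(V) with rank(1 − g) ≤ n/2. Then ℓ_r(g) = ℓ_J(g), i.e., rank(1 − g) = min over α ∈ F× of rank(α·1 − g). -/

import Mathlib

/-- If `g ∈ GL(V)` with `rank(1 - g) ≤ n/2` (where `n = dim V`), then
`rank(1 - g) = min_{α ∈ F×} rank(α·1 - g)`, i.e. `ℓ_r(g) = ℓ_J(g)`. -/
theorem rank_length_eq_jordan_length {K V : Type*} [Field K] [AddCommGroup V]
    [Module K V] [FiniteDimensional K V]
    (n : ℕ) (hn : n = Module.finrank K V) (g : V ≃ₗ[K] V)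
    (h : 2 * Module.finrank K (LinearMap.range ((LinearMap.id : V →ₗ[K] V) - (g : V →ₗ[K] V))) ≤ n) :
    IsLeast {d : ℕ | ∃ α : Kˣ, d = Module.finrank K
        (LinearMap.range ((α : K) • (LinearMap.id : V →ₗ[K] V) - (g : V →ₗ[K] V)))}
      (Module.finrank K (LinearMap.range ((LinearMap.id : V →ₗ[K] V) - (g : V →ₗ[K] V)))) := by
  constructor
  · exact ⟨1, by rw [Units.val_one, one_smul]⟩
  · rintro d ⟨α, rfl⟩
    set f1 : V →ₗ[K] V := LinearMap.id - (g : V →ₗ[K] V) with hf1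
    set fa : V →ₗ[K] V := (α : K) • LinearMap.id - (g : V →ₗ[K] V) with hfa
    by_cases hα : (α : K) = 1
    · rw [hfa, hα, one_smul, ← hf1]
    -- kernels are disjoint
    have hdisj : Disjoint (LinearMap.ker f1) (LinearMap.ker fa) := by
      rw [disjoint_iff]
      ext v
      simp only [Submodule.mem_inf, LinearMap.mem_ker, Submodule.mem_bot]
      constructor
      · rintro ⟨h1, h2⟩
        have e1 : g v = v := by
          have := h1
          simp [hf1, sub_eq_zero] at this
          exact this.symm
        have e2 : g v = (α : K) • v := by
          have := h2
          simp [hfa, sub_eq_zero] at this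
          exact this.symm
        have : (α : K) • v - v = 0 := by rw [← e2, e1, sub_self]
        have : ((α : K) - 1) • v = 0 := by rw [sub_smul, one_smul]; exact this
        rcases smul_eq_zero.mp this with h' | h'
        · exact absurd (sub_eq_zero.mp h') hα
        · exact h'
      · rintro rfl; simp
    have hsum : Module.finrank K (LinearMap.ker f1) + Module.finrank K (LinearMap.ker fa) ≤ n := by
      have := Submodule.finrank_sup_add_finrank_inf_eq (LinearMap.ker f1) (LinearMap.ker fa)
      rw [disjoint_iff.mp hdisj, finrank_bot, add_zero] at this
      rw [← this, hn]
      exact Submodule.finrank_le _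
    have rn1 := LinearMap.finrank_range_add_finrank_ker f1
    have rna := LinearMap.finrank_range_add_finrank_ker fa
    rw [← hn] at rn1 rna
    omega
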